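/- Let ij be an ordered pair of units with i ≠ j. Suppose Y_{i,0}, Y_{i,1}, Y_{j,0}, Y*_{ij}(1), Y*_{ij}(0) are {0,1}-valued random variables satisfying: (a) the consistency relations Y_{i,1}·Y_{j,0} = Y*_{ij}(1)·Y_{j,0} and Y_{i,1}·(1−Y_{j,0}) = Y*_{ij}(0)·(1−Y_{j,0}) almost surely; (b) irreversibility, Y_{i,1}·(1−Y_{i,0}) = Y_{i,1} almost surely; (c) Y_{i,0} and Y_{j,0} are conditionally independent given a sub-σ-algebra 𝒢; (d) (Y*_{ij}(1), Y*_{ij}(0)) is conditionally independent of Y_{j,0} given the σ-algebra generated by 𝒢 and Y_{i,0}. Then, almost surely, E[(Y*_{ij}(1) − Y*_{ij}(0))·1{Y_{i,0} = 0} | 𝒢] · μ_{j,0}(1 − μ_{j,0}) = Cov(Y_{i,1}, Y_{j,0} | 𝒢), where μ_{j,0} = E[Y_{j,0}|𝒢]. -/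

import Mathlib

open MeasureTheory ProbabilityTheory

section Helpers

variable {Ω : Type*} [mΩ : MeasurableSpace Ω]

lemma intg01 (μ : Measure Ω) [IsFiniteMeasure μ] {f : Ω → ℝ}
    (hf : Measurable[mΩ] f) (hb : ∀ ω, f ω = 0 ∨ f ω = 1) : Integrable f μ := by
  refine Integrable.mono' (integrable_const 1) hf.aestronglyMeasurable
    (Filter.Eventually.of_forall fun ω => ?_)
  rcases hb ω with h | h <;> simp [h]

lemma mul01 {f g : Ω → ℝ} (hfb : ∀ ω, f ω = 0 ∨ f ω = 1) (hgb : ∀ ω, g ω = 0 ∨ g ω = 1) :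
    ∀ ω, f ω * g ω = 0 ∨ f ω * g ω = 1 := fun ω => by
  rcases hfb ω with h | h <;> rcases hgb ω with h' | h' <;> simp [h, h']

lemma eq_indicator01 {f : Ω → ℝ} (hb : ∀ ω, f ω = 0 ∨ f ω = 1) :
    f = (f ⁻¹' {1}).indicator (fun _ => (1 : ℝ)) := by
  funext ω
  rcases hb ω with h | h <;> simp [Set.indicator_apply, Set.mem_preimage, h]

lemma condexp_abs_le_one (μ : Measure Ω) [IsFiniteMeasure μ]
    {m : MeasurableSpace Ω} (hm : m ≤ mΩ) {f : Ω → ℝ}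
    (hf : Measurable[mΩ] f) (hb : ∀ ω, f ω = 0 ∨ f ω = 1) :
    ∀ᵐ ω ∂μ, ‖(μ[f|m]) ω‖ ≤ 1 := by
  have h0 : (0 : Ω → ℝ) ≤ᵐ[μ] μ[f|m] :=
    condExp_nonneg (Filter.Eventually.of_forall fun ω => by rcases hb ω with h | h <;> simp [h])
  have h1 : μ[f|m] ≤ᵐ[μ] μ[fun _ => (1 : ℝ)|m] :=
    condExp_mono (intg01 (mΩ := mΩ) μ hf hb) (integrable_const 1)
      (Filter.Eventually.of_forall fun ω => by rcases hb ω with h | h <;> simp [h])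
  rw [condExp_const hm] at h1
  filter_upwards [h0, h1] with ω hω0 hω1
  simp only [Pi.zero_apply] at hω0
  rw [Real.norm_eq_abs, abs_le]
  exact ⟨by linarith, hω1⟩

lemma condexp_mul01 [StandardBorelSpace Ω] (μ : Measure Ω) [IsFiniteMeasure μ]
    {m : MeasurableSpace Ω} {hm : m ≤ mΩ}
    {X Y : Ω → ℝ} (hX : Measurable[mΩ] X) (hY : Measurable[mΩ] Y)
    (hXb : ∀ ω, X ω = 0 ∨ X ω = 1) (hYb : ∀ ω, Y ω = 0 ∨ Y ω = 1)
    (h : CondIndepFun m hm X Y μ) :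
    μ[fun ω => X ω * Y ω | m] =ᵐ[μ] fun ω => (μ[X|m]) ω * (μ[Y|m]) ω := by
  have hfac := (condIndepFun_iff_condExp_inter_preimage_eq_mul hX hY).mp h {1} {1}
      (measurableSet_singleton 1) (measurableSet_singleton 1)
  have hXY : (fun ω => X ω * Y ω) =
      (X ⁻¹' {1} ∩ Y ⁻¹' {1}).indicator (fun _ => (1 : ℝ)) := by
    funext ω
    rcases hXb ω with h1 | h1 <;> rcases hYb ω with h2 | h2 <;>
      simp [Set.indicator_apply, Set.mem_preimage, h1, h2]
  have hXc : (μ⟦X ⁻¹' {1}|m⟧) = μ[X|m] := by conv_rhs => rw [eq_indicator01 hXb]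
  have hYc : (μ⟦Y ⁻¹' {1}|m⟧) = μ[Y|m] := by conv_rhs => rw [eq_indicator01 hYb]
  calc μ[fun ω => X ω * Y ω | m] = μ⟦X ⁻¹' {1} ∩ Y ⁻¹' {1}|m⟧ := by rw [hXY]
    _ =ᵐ[μ] fun ω => (μ⟦X ⁻¹' {1}|m⟧) ω * (μ⟦Y ⁻¹' {1}|m⟧) ω := hfac
    _ = fun ω => (μ[X|m]) ω * (μ[Y|m]) ω := by rw [hXc, hYc]

lemma condexp_sup_comap [StandardBorelSpace Ω] (μ : Measure Ω) [IsProbabilityMeasure μ]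
    {G : MeasurableSpace Ω} {hG : G ≤ mΩ}
    {X Y : Ω → ℝ} (hX : Measurable[mΩ] X) (hY : Measurable[mΩ] Y)
    (hXb : ∀ ω, X ω = 0 ∨ X ω = 1) (hYb : ∀ ω, Y ω = 0 ∨ Y ω = 1)
    (hci : CondIndepFun G hG X Y μ)
    (hle : G ⊔ MeasurableSpace.comap X inferInstance ≤ mΩ) :
    μ[Y | G ⊔ MeasurableSpace.comap X inferInstance] =ᵐ[μ] μ[Y | G] := by
  letI : MeasurableSpace Ω := mΩ
  set E : Set Ω := X ⁻¹' {1} with hE_def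
  set P : Set (Set Ω) := {s | ∃ g, MeasurableSet[G] g ∧ (s = g ∨ s = g ∩ E)} with hP_def
  have hPpi : IsPiSystem P := by
    rintro s ⟨g1, hg1, hs⟩ t ⟨g2, hg2, ht⟩ -
    refine ⟨g1 ∩ g2, hg1.inter hg2, ?_⟩
    rcases hs with rfl | rfl <;> rcases ht with rfl | rfl
    · exact Or.inl rfl
    · exact Or.inr (by ext x; simp [Set.mem_inter_iff]; tauto)
    · exact Or.inr (by ext x; simp [Set.mem_inter_iff]; tauto)
    · exact Or.inr (by ext x; simp [Set.mem_inter_iff]; tauto)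
  have hgen : G ⊔ MeasurableSpace.comap X inferInstance = MeasurableSpace.generateFrom P := by
    apply le_antisymm
    · apply sup_le
      · exact fun s hs => MeasurableSpace.measurableSet_generateFrom ⟨s, hs, Or.inl rfl⟩
      · rintro s ⟨t, ht, rfl⟩
        have hE : MeasurableSet[MeasurableSpace.generateFrom P] E :=
          MeasurableSpace.measurableSet_generateFrom
            ⟨Set.univ, MeasurableSet.univ, Or.inr (Set.univ_inter E).symm⟩
        by_cases h1 : (1 : ℝ) ∈ t <;> by_cases h0 : (0 : ℝ) ∈ t
        · have : X ⁻¹' t = Set.univ := by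
            ext ω; simp only [Set.mem_preimage, Set.mem_univ, iff_true]
            rcases hXb ω with h | h <;> rw [h] <;> assumption
          rw [this]; exact @MeasurableSet.univ Ω (MeasurableSpace.generateFrom P)
        · have : X ⁻¹' t = E := by
            ext ω; simp only [Set.mem_preimage, hE_def, Set.mem_singleton_iff]
            rcases hXb ω with h | h <;> rw [h] <;> simp_all
          rw [this]; exact hE
        · have : X ⁻¹' t = Eᶜ := by
            ext ω
            simp only [Set.mem_preimage, Set.mem_compl_iff, hE_def, Set.mem_singleton_iff]
            rcases hXb ω with h | h <;> rw [h] <;> simp_all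
          rw [this]; exact hE.compl
        · have : X ⁻¹' t = ∅ := by
            ext ω; simp only [Set.mem_preimage, Set.mem_empty_iff_false, iff_false]
            rcases hXb ω with h | h <;> rw [h] <;> assumption
          rw [this]; exact @MeasurableSet.empty Ω (MeasurableSpace.generateFrom P)
    · apply MeasurableSpace.generateFrom_le
      rintro s ⟨g, hg, (rfl | rfl)⟩
      · exact (le_sup_left : G ≤ _) _ hg
      · have hE' : MeasurableSet[G ⊔ MeasurableSpace.comap X inferInstance] E :=
          (le_sup_right : MeasurableSpace.comap X inferInstance ≤ _) _
            ⟨{1}, measurableSet_singleton 1, rfl⟩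
        exact ((le_sup_left : G ≤ _) _ hg).inter hE'
  have hYint : Integrable Y μ := intg01 (mΩ := mΩ) μ hY hYb
  have hkey : μ[fun ω => X ω * Y ω | G] =ᵐ[μ] fun ω => (μ[X|G]) ω * (μ[Y|G]) ω :=
    condexp_mul01 μ hX hY hXb hYb hci
  have hiMul : ∀ f : Ω → ℝ, E.indicator f = fun x => X x * f x := by
    intro f; funext x
    rcases hXb x with h | h <;>
      simp [Set.indicator_apply, hE_def, Set.mem_preimage, h]
  have heq : ∀ s, MeasurableSet[G ⊔ MeasurableSpace.comap X inferInstance] s → μ s < ⊤ →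
      ∫ x in s, (μ[Y|G]) x ∂μ = ∫ x in s, Y x ∂μ := by
    intro s hs _
    rw [hgen] at hs
    refine @MeasurableSpace.induction_on_inter Ω
      (MeasurableSpace.generateFrom P) (fun s _ => ∫ x in s, (μ[Y|G]) x ∂μ = ∫ x in s, Y x ∂μ) P
      rfl hPpi (by simp) ?_ ?_ ?_ s hs
    · rintro t ⟨g, hg, (rfl | rfl)⟩
      · exact setIntegral_condExp hG hYint hg
      · have hgm : MeasurableSet[mΩ] g := hG _ hg
        have hEm : MeasurableSet[mΩ] E := hX (measurableSet_singleton 1)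
        have hXYint : Integrable (fun x => X x * Y x) μ :=
          intg01 (mΩ := mΩ) μ (hX.mul hY) (mul01 hXb hYb)
        have hCint : Integrable (fun x => (μ[Y|G]) x * X x) μ :=
          (intg01 (mΩ := mΩ) μ hX hXb).bdd_mul
            (stronglyMeasurable_condExp.mono hG).aestronglyMeasurable
            (condexp_abs_le_one μ hG hY hYb)
        have hpull : μ[fun x => (μ[Y|G]) x * X x|G] =ᵐ[μ]
            fun x => (μ[Y|G]) x * (μ[X|G]) x := by
          have := condExp_stronglyMeasurable_mul_of_bound hG
            (stronglyMeasurable_condExp (f := Y)) (intg01 (mΩ := mΩ) μ hX hXb) 1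
            (condexp_abs_le_one μ hG hY hYb)
          exact this
        calc ∫ x in g ∩ E, (μ[Y|G]) x ∂μ
            = ∫ x in g, E.indicator (fun x => (μ[Y|G]) x) x ∂μ :=
              (setIntegral_indicator hEm).symm
          _ = ∫ x in g, X x * (μ[Y|G]) x ∂μ := by rw [hiMul]
          _ = ∫ x in g, (μ[Y|G]) x * X x ∂μ :=
              integral_congr_ae (Filter.Eventually.of_forall fun x => mul_comm _ _)
          _ = ∫ x in g, (μ[fun x => (μ[Y|G]) x * X x|G]) x ∂μ :=
              (setIntegral_condExp hG hCint hg).symm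
          _ = ∫ x in g, (μ[Y|G]) x * (μ[X|G]) x ∂μ :=
              integral_congr_ae (ae_restrict_of_ae hpull)
          _ = ∫ x in g, (μ[fun x => X x * Y x|G]) x ∂μ := by
              refine integral_congr_ae (ae_restrict_of_ae ?_)
              filter_upwards [hkey] with x hx
              rw [hx, mul_comm]
          _ = ∫ x in g, X x * Y x ∂μ := setIntegral_condExp hG hXYint hg
          _ = ∫ x in g, E.indicator Y x ∂μ := by rw [hiMul Y]
          _ = ∫ x in g ∩ E, Y x ∂μ := setIntegral_indicator hEm
    · intro t ht hC
      have htm : MeasurableSet[mΩ] t := hle _ (by rw [hgen]; exact ht)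
      have e1 := integral_add_compl htm (integrable_condExp : Integrable (μ[Y|G]) μ)
      have e2 := integral_add_compl htm hYint
      have etot : ∫ x, (μ[Y|G]) x ∂μ = ∫ x, Y x ∂μ := integral_condExp hG
      linarith
    · intro f hdisj hfm hC
      have hm' : ∀ i, MeasurableSet[mΩ] (f i) := fun i => hle _ (by rw [hgen]; exact hfm i)
      rw [integral_iUnion hm' hdisj integrable_condExp.integrableOn,
        integral_iUnion hm' hdisj hYint.integrableOn]
      exact tsum_congr fun i => hC i
  exact (ae_eq_condExp_of_forall_setIntegral_eq hle hYint
    (fun s _ _ => integrable_condExp.integrableOn) heq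
    (AEStronglyMeasurable.mono le_sup_left
      stronglyMeasurable_condExp.aestronglyMeasurable)).symm

end Helpers

/-- Conditional covariance of two real random variables given a sub-σ-algebra `m`. -/
noncomputable def condCov {Ω : Type*} {m0 : MeasurableSpace Ω} (μ : Measure Ω)
    (m : MeasurableSpace Ω) (X Y : Ω → ℝ) : Ω → ℝ :=
  fun ω => (μ[fun ω' => X ω' * Y ω' | m]) ω - (μ[X | m]) ω * (μ[Y | m]) ω

/-- (edge-level identification identity, proof of Lemma 2.1(B) of
He–Song, "Measuring Diffusion over a Large Network"), for the average spillover effect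
on the untreated (conditional on `Y_{i,0} = 0`) under irreversible state changes:
a.s. `E[(Y*_{ij}(1) − Y*_{ij}(0))·1{Y_{i,0} = 0} | 𝒢] · μ_{j,0}(1 − μ_{j,0})
      = Cov(Y_{i,1}, Y_{j,0} | 𝒢)`. -/
theorem stmt2 {Ω : Type*} [mΩ : MeasurableSpace Ω] [StandardBorelSpace Ω]
    (μ : Measure Ω) [IsProbabilityMeasure μ]
    (Yi0 Yi1 Yj0 Ys1 Ys0 : Ω → ℝ)
    (hYi0 : Measurable Yi0) (hYi1 : Measurable Yi1) (hYj0 : Measurable Yj0)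
    (hYs1 : Measurable Ys1) (hYs0 : Measurable Ys0)
    (hYi0b : ∀ ω, Yi0 ω = 0 ∨ Yi0 ω = 1)
    (hYi1b : ∀ ω, Yi1 ω = 0 ∨ Yi1 ω = 1)
    (hYj0b : ∀ ω, Yj0 ω = 0 ∨ Yj0 ω = 1)
    (hYs1b : ∀ ω, Ys1 ω = 0 ∨ Ys1 ω = 1)
    (hYs0b : ∀ ω, Ys0 ω = 0 ∨ Ys0 ω = 1)
    (G : MeasurableSpace Ω) (hG : G ≤ mΩ)
    -- (a) consistency relations
    (hcons1 : ∀ᵐ ω ∂μ, Yi1 ω * Yj0 ω = Ys1 ω * Yj0 ω)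
    (hcons0 : ∀ᵐ ω ∂μ, Yi1 ω * (1 - Yj0 ω) = Ys0 ω * (1 - Yj0 ω))
    -- (b) irreversibility
    (hirr : ∀ᵐ ω ∂μ, Yi1 ω * (1 - Yi0 ω) = Yi1 ω)
    -- (c) `Y_{i,0}` and `Y_{j,0}` conditionally independent given 𝒢
    (hci0 : CondIndepFun G hG Yi0 Yj0 μ)
    -- (d) counterfactuals conditionally independent of `Y_{j,0}`
    --     given the σ-algebra generated by 𝒢 and `Y_{i,0}`
    (hle : G ⊔ MeasurableSpace.comap Yi0 inferInstance ≤ mΩ)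
    (hciY : CondIndepFun (G ⊔ MeasurableSpace.comap Yi0 inferInstance) hle
      (fun ω => (Ys1 ω, Ys0 ω)) Yj0 μ) :
    ∀ᵐ ω ∂μ,
      (μ[fun ω' => (Ys1 ω' - Ys0 ω') * (if Yi0 ω' = 0 then (1 : ℝ) else 0) | G]) ω
          * ((μ[Yj0 | G]) ω * (1 - (μ[Yj0 | G]) ω))
        = condCov μ G Yi1 Yj0 ω := by
  set H : MeasurableSpace Ω := G ⊔ MeasurableSpace.comap Yi0 inferInstance with hH_def
  have hGH : G ≤ H := le_sup_left
  set F : Ω → ℝ := fun ω => 1 - Yi0 ω with hF_def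
  letI : MeasurableSpace Ω := mΩ
  have hF : Measurable[mΩ] F := measurable_const.sub hYi0
  have hFb : ∀ ω, F ω = 0 ∨ F ω = 1 := fun ω => by
    rcases hYi0b ω with h | h <;> simp [hF_def, h]
  have hYi0H : Measurable[H] Yi0 := by
    have : MeasurableSpace.comap Yi0 inferInstance ≤ H := le_sup_right
    exact measurable_iff_comap_le.mpr this
  have hFsm : StronglyMeasurable[H] F :=
    ((measurable_const.sub hYi0H : Measurable[H] F)).stronglyMeasurable
  have hFbd : ∀ᵐ ω ∂μ, ‖F ω‖ ≤ 1 :=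
    Filter.Eventually.of_forall fun ω => by rcases hFb ω with h | h <;> simp [h]
  -- conditional independence of the components given H
  have hf1 : CondIndepFun H hle Ys1 Yj0 μ := by
    have h := hciY.comp (measurable_fst (α := ℝ) (β := ℝ)) measurable_id
    exact h
  have hf0 : CondIndepFun H hle Ys0 Yj0 μ := by
    have h := hciY.comp (measurable_snd (α := ℝ) (β := ℝ)) measurable_id
    exact h
  -- E[Yj0 | H] = E[Yj0 | G]
  have hnu : μ[Yj0|H] =ᵐ[μ] μ[Yj0|G] :=
    condexp_sup_comap μ hYi0 hYj0 hYi0b hYj0b hci0 hle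
  -- factorizations given H
  have hm1 : μ[fun ω => Ys1 ω * Yj0 ω|H] =ᵐ[μ]
      fun ω => (μ[Ys1|H]) ω * (μ[Yj0|H]) ω := condexp_mul01 μ hYs1 hYj0 hYs1b hYj0b hf1
  have hm0 : μ[fun ω => Ys0 ω * Yj0 ω|H] =ᵐ[μ]
      fun ω => (μ[Ys0|H]) ω * (μ[Yj0|H]) ω := condexp_mul01 μ hYs0 hYj0 hYs0b hYj0b hf0
  -- integrability
  have int_s1j : Integrable (fun ω => Ys1 ω * Yj0 ω) μ :=
    intg01 (mΩ := mΩ) μ (hYs1.mul hYj0) (mul01 hYs1b hYj0b)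
  have int_s0j : Integrable (fun ω => Ys0 ω * Yj0 ω) μ :=
    intg01 (mΩ := mΩ) μ (hYs0.mul hYj0) (mul01 hYs0b hYj0b)
  have int_s0 : Integrable Ys0 μ := intg01 (mΩ := mΩ) μ hYs0 hYs0b
  have int_s1 : Integrable Ys1 μ := intg01 (mΩ := mΩ) μ hYs1 hYs1b
  have int_Fs1 : Integrable (F * Ys1) μ :=
    intg01 (mΩ := mΩ) μ (hF.mul hYs1) (mul01 hFb hYs1b)
  have int_Fs0 : Integrable (F * Ys0) μ :=
    intg01 (mΩ := mΩ) μ (hF.mul hYs0) (mul01 hFb hYs0b)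
  have int_FE1 : Integrable (F * μ[Ys1|H]) μ :=
    integrable_condExp.bdd_mul hF.aestronglyMeasurable hFbd
  have int_FE0 : Integrable (F * μ[Ys0|H]) μ :=
    integrable_condExp.bdd_mul hF.aestronglyMeasurable hFbd
  -- pull-out of F given H
  have hpullH : ∀ g : Ω → ℝ, Integrable g μ →
      μ[F * g|H] =ᵐ[μ] F * μ[g|H] := fun g hg =>
    condExp_stronglyMeasurable_mul_of_bound hle hFsm hg 1 hFbd
  -- pull-out of G-measurable factors
  have hμjbd := condexp_abs_le_one μ hG hYj0 hYj0b
  have hpullG1 : ∀ g : Ω → ℝ, Integrable g μ →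
      μ[(μ[Yj0|G]) * g|G] =ᵐ[μ] (μ[Yj0|G]) * μ[g|G] := fun g hg =>
    condExp_stronglyMeasurable_mul_of_bound hG stronglyMeasurable_condExp hg 1 hμjbd
  have hpullG2 : ∀ g : Ω → ℝ, Integrable g μ →
      μ[((1 : Ω → ℝ) - μ[Yj0|G]) * g|G] =ᵐ[μ] ((1 : Ω → ℝ) - μ[Yj0|G]) * μ[g|G] := by
    intro g hg
    refine condExp_stronglyMeasurable_mul_of_bound hG
      (stronglyMeasurable_const.sub stronglyMeasurable_condExp) hg 2 ?_
    filter_upwards [hμjbd] with ω hω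
    have : ‖(1 : ℝ) - (μ[Yj0|G]) ω‖ ≤ ‖(1 : ℝ)‖ + ‖(μ[Yj0|G]) ω‖ := norm_sub_le _ _
    simp only [Pi.sub_apply, Pi.one_apply]
    calc ‖(1 : ℝ) - (μ[Yj0|G]) ω‖ ≤ ‖(1 : ℝ)‖ + ‖(μ[Yj0|G]) ω‖ := norm_sub_le _ _
      _ ≤ 1 + 1 := by rw [norm_one]; linarith
      _ = 2 := by norm_num
  -- towers: μ[F * μ[·|H] | G] = μ[F * · | G]
  have hIA : μ[F * μ[Ys1|H]|G] =ᵐ[μ] μ[F * Ys1|G] :=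
    (condExp_congr_ae (hpullH Ys1 int_s1).symm).trans (condExp_condExp_of_le hGH hle)
  have hIB : μ[F * μ[Ys0|H]|G] =ᵐ[μ] μ[F * Ys0|G] :=
    (condExp_congr_ae (hpullH Ys0 int_s0).symm).trans (condExp_condExp_of_le hGH hle)
  -- Step 1: E[Yi1 * Yj0 | G] = μj * A
  have hQ1 : μ[fun ω => Yi1 ω * Yj0 ω|G] =ᵐ[μ] (μ[Yj0|G]) * μ[F * Ys1|G] := by
    have h_ae1 : (fun ω => Yi1 ω * Yj0 ω) =ᵐ[μ] F * (fun ω => Ys1 ω * Yj0 ω) := by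
      filter_upwards [hcons1, hirr] with ω h1 h2
      show Yi1 ω * Yj0 ω = F ω * (Ys1 ω * Yj0 ω)
      simp only [hF_def]
      linear_combination (1 - Yi0 ω) * h1 - Yj0 ω * h2
    have hHstep : μ[fun ω => Yi1 ω * Yj0 ω|H] =ᵐ[μ] (μ[Yj0|G]) * (F * μ[Ys1|H]) := by
      calc μ[fun ω => Yi1 ω * Yj0 ω|H]
          =ᵐ[μ] μ[F * (fun ω => Ys1 ω * Yj0 ω)|H] := condExp_congr_ae h_ae1
        _ =ᵐ[μ] F * μ[fun ω => Ys1 ω * Yj0 ω|H] := hpullH _ int_s1j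
        _ =ᵐ[μ] (μ[Yj0|G]) * (F * μ[Ys1|H]) := by
            filter_upwards [hm1, hnu] with ω ha hb
            simp only [Pi.mul_apply]
            rw [ha, hb]; ring
    calc μ[fun ω => Yi1 ω * Yj0 ω|G]
        =ᵐ[μ] μ[μ[fun ω => Yi1 ω * Yj0 ω|H]|G] := (condExp_condExp_of_le hGH hle).symm
      _ =ᵐ[μ] μ[(μ[Yj0|G]) * (F * μ[Ys1|H])|G] := condExp_congr_ae hHstep
      _ =ᵐ[μ] (μ[Yj0|G]) * μ[F * μ[Ys1|H]|G] := hpullG1 _ int_FE1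
      _ =ᵐ[μ] (μ[Yj0|G]) * μ[F * Ys1|G] := Filter.EventuallyEq.mul (Filter.EventuallyEq.refl _ _) hIA
  -- Step 2: E[Yi1 | G] = μj * A + (1 - μj) * B
  have hQ0 : μ[Yi1|G] =ᵐ[μ]
      (μ[Yj0|G]) * μ[F * Ys1|G] + ((1 : Ω → ℝ) - μ[Yj0|G]) * μ[F * Ys0|G] := by
    have h_ae : Yi1 =ᵐ[μ] F * ((fun ω => Ys1 ω * Yj0 ω) + fun ω => Ys0 ω * (1 - Yj0 ω)) := by
      filter_upwards [hcons1, hcons0, hirr] with ω h1 h0 h2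
      show Yi1 ω = F ω * (Ys1 ω * Yj0 ω + Ys0 ω * (1 - Yj0 ω))
      simp only [hF_def]
      linear_combination (1 - Yi0 ω) * h1 + (1 - Yi0 ω) * h0 - h2
    have int_sum : Integrable ((fun ω => Ys1 ω * Yj0 ω) + fun ω => Ys0 ω * (1 - Yj0 ω)) μ := by
      refine int_s1j.add ?_
      have : (fun ω => Ys0 ω * (1 - Yj0 ω)) = Ys0 - fun ω => Ys0 ω * Yj0 ω := by
        funext ω; simp only [Pi.sub_apply]; ring
      rw [this]; exact int_s0.sub int_s0j
    have hsum : μ[(fun ω => Ys1 ω * Yj0 ω) + fun ω => Ys0 ω * (1 - Yj0 ω)|H] =ᵐ[μ]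
        fun ω => (μ[Ys1|H]) ω * (μ[Yj0|H]) ω +
          ((μ[Ys0|H]) ω - (μ[Ys0|H]) ω * (μ[Yj0|H]) ω) := by
      have h2 : (fun ω => Ys0 ω * (1 - Yj0 ω)) = Ys0 - fun ω => Ys0 ω * Yj0 ω := by
        funext ω; simp only [Pi.sub_apply]; ring
      calc μ[(fun ω => Ys1 ω * Yj0 ω) + fun ω => Ys0 ω * (1 - Yj0 ω)|H]
          =ᵐ[μ] μ[fun ω => Ys1 ω * Yj0 ω|H] + μ[fun ω => Ys0 ω * (1 - Yj0 ω)|H] :=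
            condExp_add int_s1j (by rw [h2]; exact int_s0.sub int_s0j) _
        _ =ᵐ[μ] μ[fun ω => Ys1 ω * Yj0 ω|H] + (μ[Ys0|H] - μ[fun ω => Ys0 ω * Yj0 ω|H]) := by
            refine Filter.EventuallyEq.add (Filter.EventuallyEq.refl _ _) ?_
            rw [h2]; exact condExp_sub int_s0 int_s0j _
        _ =ᵐ[μ] fun ω => (μ[Ys1|H]) ω * (μ[Yj0|H]) ω +
            ((μ[Ys0|H]) ω - (μ[Ys0|H]) ω * (μ[Yj0|H]) ω) := by
            filter_upwards [hm1, hm0] with ω ha hb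
            simp only [Pi.add_apply, Pi.sub_apply]
            rw [ha, hb]
    have hHstep : μ[Yi1|H] =ᵐ[μ]
        (μ[Yj0|G]) * (F * μ[Ys1|H]) + ((1 : Ω → ℝ) - μ[Yj0|G]) * (F * μ[Ys0|H]) := by
      calc μ[Yi1|H]
          =ᵐ[μ] μ[F * ((fun ω => Ys1 ω * Yj0 ω) + fun ω => Ys0 ω * (1 - Yj0 ω))|H] :=
            condExp_congr_ae h_ae
        _ =ᵐ[μ] F * μ[(fun ω => Ys1 ω * Yj0 ω) + fun ω => Ys0 ω * (1 - Yj0 ω)|H] :=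
            hpullH _ int_sum
        _ =ᵐ[μ] (μ[Yj0|G]) * (F * μ[Ys1|H]) + ((1 : Ω → ℝ) - μ[Yj0|G]) * (F * μ[Ys0|H]) := by
            filter_upwards [hsum, hnu] with ω ha hb
            simp only [Pi.mul_apply, Pi.add_apply, Pi.sub_apply, Pi.one_apply]
            rw [ha, hb]; ring
    calc μ[Yi1|G]
        =ᵐ[μ] μ[μ[Yi1|H]|G] := (condExp_condExp_of_le hGH hle).symm
      _ =ᵐ[μ] μ[(μ[Yj0|G]) * (F * μ[Ys1|H]) +
          ((1 : Ω → ℝ) - μ[Yj0|G]) * (F * μ[Ys0|H])|G] := condExp_congr_ae hHstep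
      _ =ᵐ[μ] μ[(μ[Yj0|G]) * (F * μ[Ys1|H])|G] +
          μ[((1 : Ω → ℝ) - μ[Yj0|G]) * (F * μ[Ys0|H])|G] := by
            refine condExp_add ?_ ?_ _
            · exact int_FE1.bdd_mul (stronglyMeasurable_condExp.mono hG).aestronglyMeasurable hμjbd
            · refine int_FE0.bdd_mul (c := 2)
                ((stronglyMeasurable_const.sub stronglyMeasurable_condExp).mono hG).aestronglyMeasurable ?_
              filter_upwards [hμjbd] with ω hω
              simp only [Pi.sub_apply, Pi.one_apply]
              calc ‖(1 : ℝ) - (μ[Yj0|G]) ω‖ ≤ ‖(1 : ℝ)‖ + ‖(μ[Yj0|G]) ω‖ := norm_sub_le _ _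
                _ ≤ (2 : ℝ) := by rw [norm_one]; linarith
      _ =ᵐ[μ] (μ[Yj0|G]) * μ[F * Ys1|G] + ((1 : Ω → ℝ) - μ[Yj0|G]) * μ[F * Ys0|G] := by
            refine Filter.EventuallyEq.add ?_ ?_
            · exact (hpullG1 _ int_FE1).trans (Filter.EventuallyEq.mul (Filter.EventuallyEq.refl _ _) hIA)
            · exact (hpullG2 _ int_FE0).trans (Filter.EventuallyEq.mul (Filter.EventuallyEq.refl _ _) hIB)
  -- the integrand on the left equals F * Ys1 - F * Ys0
  have hD : μ[fun ω' => (Ys1 ω' - Ys0 ω') * (if Yi0 ω' = 0 then (1 : ℝ) else 0)|G] =ᵐ[μ]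
      μ[F * Ys1|G] - μ[F * Ys0|G] := by
    have hfun : (fun ω' => (Ys1 ω' - Ys0 ω') * (if Yi0 ω' = 0 then (1 : ℝ) else 0)) =
        F * Ys1 - F * Ys0 := by
      funext ω
      simp only [Pi.sub_apply, Pi.mul_apply, hF_def]
      rcases hYi0b ω with h | h <;> simp [h] <;> ring
    rw [hfun]
    exact condExp_sub int_Fs1 int_Fs0 _
  -- final algebra
  filter_upwards [hD, hQ1, hQ0] with ω h₁ h₂ h₃
  simp only [condCov]
  rw [h₁, h₂, h₃]
  simp only [Pi.mul_apply, Pi.add_apply, Pi.sub_apply, Pi.one_apply]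
  ring
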